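/- The all-active policy class Π_act is an (H+1, H)-sunflower: the core Π_core = {π_0} ∪ {π_h : h ∈ [H]}, where π_0 is identically 0 and π_h(s) = 1 if and only if s ∈ S_h, together with the petal sets S_π = {s_(j,h) : h ∈ [H]} for every π ∈ Π^j_act, witnesses this. -/
import Mathlib


/-- A partial trajectory from layer `h` to layer `h'` is given by states `σ i ∈ S i` and
actions `α i` for `h ≤ i ≤ h'`; it is consistent with the policy `π` if `π` takes action
`α i` on the state `σ i` for every `h ≤ i ≤ h'`. -/
def Consistent {S : ℕ → Type} {A : Type} (π : ∀ h : ℕ, S h → A)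
    (σ : ∀ i : ℕ, S i) (α : ℕ → A) (h h' : ℕ) : Prop :=
  ∀ i : ℕ, h ≤ i → i ≤ h' → π i (σ i) = α i

/-- `π` is an `Sbar`-petal on the policy set `core` (for horizon `H`): every partial
trajectory from layer `h` to layer `h'` (with `h ≤ h' < H`, `0`-indexed) that is
consistent with `π` is either consistent with some member of `core`, or visits a state of
`Sbar` at some layer `i` with `h < i ≤ h'`.  States are recorded as pairs `⟨i, s⟩` of a
layer and a state of that layer. -/
def IsPetal (H : ℕ) {S : ℕ → Type} {A : Type} (core : Set (∀ h : ℕ, S h → A))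
    (Sbar : Set ((i : ℕ) × S i)) (π : ∀ h : ℕ, S h → A) : Prop :=
  ∀ h h' : ℕ, h ≤ h' → h' < H → ∀ (σ : ∀ i : ℕ, S i) (α : ℕ → A),
    Consistent π σ α h h' →
      (∃ π' ∈ core, Consistent π' σ α h h') ∨ (∃ i : ℕ, h < i ∧ i ≤ h' ∧ ⟨i, σ i⟩ ∈ Sbar)

/-- The policy class `P` is a `(K, D)`-sunflower: there is a core of at most `K` policies
such that every `π ∈ P` is an `S_π`-petal on the core for some set `S_π` of at most `D`
states. -/
def IsSunflower (H : ℕ) {S : ℕ → Type} {A : Type} (K D : ℕ)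
    (P : Set (∀ h : ℕ, S h → A)) : Prop :=
  ∃ core : Set (∀ h : ℕ, S h → A), core.Finite ∧ core.ncard ≤ K ∧
    ∀ π ∈ P, ∃ Sbar : Set ((i : ℕ) × S i), Sbar.Finite ∧ Sbar.ncard ≤ D ∧
      IsPetal H core Sbar π

/-- The sub-class `Π^j_act` of policies that are free on the column `j` and play `0`
(`false`) elsewhere. -/
def colActiveClass (K : ℕ) (j : Fin (K + 1)) : Set (∀ _ : ℕ, Fin (K + 1) → Bool) :=
  {π | ∃ b : ℕ → Bool, π = fun h s => if s = j then b h else false}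

/-- The all-active policy class `Π_act = ∪_j Π^j_act` over the grid state space with `K + 1`
states per layer and binary actions. -/
def allActiveClass (K : ℕ) : Set (∀ _ : ℕ, Fin (K + 1) → Bool) :=
  ⋃ j : Fin (K + 1), colActiveClass K j

/-- The core policy set `{π_0} ∪ {π_h : h < H}`. -/
def coreClass (K H : ℕ) : Set (∀ _ : ℕ, Fin K → Bool) :=
  insert (fun _ _ => false) {π | ∃ h < H, π = fun i _ => decide (i = h)}

lemma coreClass_eq (K H : ℕ) :
    coreClass K H = insert (fun _ _ => false)
      ((fun h => (fun i _ => decide (i = h) : ∀ _ : ℕ, Fin K → Bool)) '' Set.Iio H) := by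
  unfold coreClass
  congr 1
  ext π
  simp [Set.mem_image, eq_comm, Set.mem_Iio]

lemma coreClass_finite (K H : ℕ) : (coreClass K H).Finite := by
  rw [coreClass_eq]
  exact (((Set.finite_Iio H).image _).insert _)

lemma coreClass_ncard (K H : ℕ) : (coreClass K H).ncard ≤ H + 1 := by
  rw [coreClass_eq]
  have h1 : ((fun h => (fun i _ => decide (i = h) : ∀ _ : ℕ, Fin K → Bool)) ''
      Set.Iio H).ncard ≤ H := by
    refine le_trans (Set.ncard_image_le (Set.finite_Iio H)) ?_
    rw [← Finset.coe_range, Set.ncard_coe_finset, Finset.card_range]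
  refine le_trans (Set.ncard_insert_le _ _) ?_
  omega

lemma col_eq (K H : ℕ) (j : Fin (K + 1)) :
    {q : (i : ℕ) × Fin (K + 1) | q.1 < H ∧ q.2 = j} =
      (fun h => (⟨h, j⟩ : (i : ℕ) × Fin (K + 1))) '' Set.Iio H := by
  ext ⟨i, s⟩
  simp only [Set.mem_setOf_eq, Set.mem_image, Set.mem_Iio]
  constructor
  · rintro ⟨hi, rfl⟩; exact ⟨i, hi, rfl⟩
  · rintro ⟨x, hx, h⟩
    obtain ⟨rfl, hs⟩ : x = i ∧ s = j := by
      have h1 := congrArg Sigma.fst h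
      simp at h1
      subst h1
      simp at h
      exact ⟨rfl, h.symm⟩
    exact ⟨hx, hs⟩

lemma col_finite (K H : ℕ) (j : Fin (K + 1)) :
    {q : (i : ℕ) × Fin (K + 1) | q.1 < H ∧ q.2 = j}.Finite := by
  rw [col_eq]; exact (Set.finite_Iio H).image _

lemma col_ncard (K H : ℕ) (j : Fin (K + 1)) :
    Set.ncard {q : (i : ℕ) × Fin (K + 1) | q.1 < H ∧ q.2 = j} ≤ H := by
  rw [col_eq]
  refine le_trans (Set.ncard_image_le (Set.finite_Iio H)) ?_
  rw [← Finset.coe_range, Set.ncard_coe_finset, Finset.card_range]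

lemma petal_lemma (K H : ℕ) (j : Fin (K + 1)) (π : ∀ _ : ℕ, Fin (K + 1) → Bool)
    (hπ : π ∈ colActiveClass K j) :
    IsPetal (S := fun _ => Fin (K + 1)) H (coreClass (K + 1) H)
      {q : (i : ℕ) × Fin (K + 1) | q.1 < H ∧ q.2 = j} π := by
  obtain ⟨b, rfl⟩ := hπ
  intro h h' hhh' hh'H σ α hc
  by_cases hcol : ∃ i, h < i ∧ i ≤ h' ∧ σ i = j
  · right
    obtain ⟨i, h1, h2, h3⟩ := hcol
    exact ⟨i, h1, h2, lt_of_le_of_lt h2 hh'H, h3⟩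
  · left
    push_neg at hcol
    by_cases hb : σ h = j ∧ b h = true
    · refine ⟨fun i _ => decide (i = h), ?_, ?_⟩
      · exact Set.mem_insert_iff.2 (Or.inr ⟨h, lt_of_le_of_lt hhh' hh'H, rfl⟩)
      · intro i hi hi'
        rw [← hc i hi hi']
        by_cases hih : i = h
        · subst hih; simp [hb.1, hb.2]
        · have hne : σ i ≠ j := hcol i (lt_of_le_of_ne hi (Ne.symm hih)) hi'
          simp [hih, hne]
    · refine ⟨fun _ _ => false, Set.mem_insert _ _, ?_⟩
      intro i hi hi'
      rw [← hc i hi hi']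
      by_cases hih : i = h
      · subst hih
        by_cases hs : σ i = j
        · have hbf : b i ≠ true := fun hbt => hb ⟨hs, hbt⟩
          simp only [hs, if_true]
          simpa using hbf
        · simp [hs]
      · have hne : σ i ≠ j := hcol i (lt_of_le_of_ne hi (Ne.symm hih)) hi'
        simp [hne]

/-- The all-active class `Π_act` is an `(H+1, H)`-sunflower, witnessed by
the core `{π_0} ∪ {π_h : h ∈ [H]}` and, for every `π ∈ Π^j_act`, the petal set
`S_π = {s_(j,h) : h ∈ [H]}` (the `j`-th column). -/
theorem allActive_sunflower (K H : ℕ) (hH : 1 ≤ H) :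
    (coreClass (K + 1) H).ncard ≤ H + 1 ∧
      (∀ j : Fin (K + 1),
        Set.ncard {q : (i : ℕ) × Fin (K + 1) | q.1 < H ∧ q.2 = j} ≤ H ∧
        ∀ π ∈ colActiveClass K j,
          IsPetal (S := fun _ => Fin (K + 1)) H (coreClass (K + 1) H)
            {q : (i : ℕ) × Fin (K + 1) | q.1 < H ∧ q.2 = j} π) ∧
      IsSunflower (S := fun _ => Fin (K + 1)) H (H + 1) H (allActiveClass K) := by
  
  refine ⟨coreClass_ncard _ _, fun j => ⟨col_ncard K H j, fun π hπ => petal_lemma K H j π hπ⟩, ?_⟩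
  refine ⟨coreClass (K + 1) H, coreClass_finite _ _, coreClass_ncard _ _, ?_⟩
  intro π hπ
  obtain ⟨j, hj⟩ := Set.mem_iUnion.mp hπ
  exact ⟨{q : (i : ℕ) × Fin (K + 1) | q.1 < H ∧ q.2 = j}, col_finite K H j, col_ncard K H j,
    petal_lemma K H j π hj⟩
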